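/- Let f be a function holomorphic on the open right half-plane {z ∈ ℂ : Re z > 0} and continuous on its closure, and suppose there exist constants C > 0 and N ∈ ℕ such that |f(z)| ≤ C(1+|z|)^N for all z with Re z ≥ 0. If f(k) = 0 for every positive integer k, then f is identically zero on {Re z > 0}. -/

import Mathlib

open Complex Filter Set Finset Topology

noncomputable def carlsonStep (g : ℂ → ℂ) (c : ℂ) : ℂ → ℂ := fun z => (z + c) * dslope g c z

lemma carlson_norm_imaxis (z : ℂ) (hz : z.re = 0) (c : ℝ) : ‖z + c‖ = ‖z - c‖ := by
  have h : z + c = -((starRingEnd ℂ) (z - c)) := by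
    apply Complex.ext <;> simp [hz]
  rw [h, norm_neg, RCLike.norm_conj]

lemma carlsonStep_eq (g : ℂ → ℂ) (c : ℂ) (hg0 : g c = 0) (z : ℂ) (hz : z ≠ c) :
    carlsonStep g c z = (z + c) * ((z - c)⁻¹ * g z) := by
  rw [carlsonStep, dslope_of_ne g hz, slope_def_field, hg0, sub_zero, div_eq_inv_mul]

lemma carlsonStep_norm (g : ℂ → ℂ) (c : ℂ) (hg0 : g c = 0) (z : ℂ) (hz : z ≠ c) :
    ‖carlsonStep g c z‖ = ‖z + c‖ * ‖z - c‖⁻¹ * ‖g z‖ := by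
  rw [carlsonStep_eq g c hg0 z hz, norm_mul, norm_mul, norm_inv, mul_assoc]

lemma carlson_step (g : ℂ → ℂ) (M : ℝ) (c : ℝ) (hc1 : 1 ≤ c)
    (hd : DifferentiableOn ℂ g {z : ℂ | 0 < z.re})
    (hcont : ContinuousOn g {z : ℂ | 0 ≤ z.re})
    (hbd : ∀ z : ℂ, 0 ≤ z.re → ‖g z‖ ≤ M)
    (hg0 : g (c : ℂ) = 0) :
    DifferentiableOn ℂ (carlsonStep g c) {z : ℂ | 0 < z.re} ∧
    ContinuousOn (carlsonStep g c) {z : ℂ | 0 ≤ z.re} ∧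
    ∀ z : ℂ, 0 ≤ z.re → ‖carlsonStep g c z‖ ≤ M := by
  have hM0 : 0 ≤ M := le_trans (norm_nonneg _) (hbd 1 (by norm_num))
  have hop : IsOpen {z : ℂ | 0 < z.re} := isOpen_lt continuous_const Complex.continuous_re
  have hcin : (c : ℂ) ∈ {z : ℂ | 0 < z.re} := by simp; linarith
  have hmem : {z : ℂ | 0 < z.re} ∈ nhds (c : ℂ) := hop.mem_nhds hcin
  have hds : DifferentiableOn ℂ (dslope g (c : ℂ)) {z : ℂ | 0 < z.re} :=
    (Complex.differentiableOn_dslope hmem).mpr hd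
  have hdG : DifferentiableOn ℂ (carlsonStep g c) {z : ℂ | 0 < z.re} :=
    ((differentiableOn_id.add (differentiableOn_const _)).mul hds)
  have hcs : ContinuousOn (dslope g (c : ℂ)) {z : ℂ | 0 ≤ z.re} := by
    intro w hw
    rcases eq_or_ne w (c : ℂ) with rfl | hne
    · exact (hds.differentiableAt hmem).continuousAt.continuousWithinAt
    · exact (continuousWithinAt_dslope_of_ne hne).mpr (hcont w hw)
  have hcG : ContinuousOn (carlsonStep g c) {z : ℂ | 0 ≤ z.re} :=
    ((continuous_id.add continuous_const).continuousOn).mul hcs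
  refine ⟨hdG, hcG, ?_⟩
  have hbig : ∀ z : ℂ, 0 ≤ z.re → c + 1 ≤ ‖z‖ → ‖carlsonStep g c z‖ ≤ (1 + 2*c) * M := by
    intro z hz hnz
    have hcnorm : ‖(c : ℂ)‖ = c := by
      rw [Complex.norm_real, Real.norm_of_nonneg (by linarith)]
    have hne : z ≠ (c : ℂ) := by
      intro h; rw [h, hcnorm] at hnz; linarith
    have h1 : (1 : ℝ) ≤ ‖z - c‖ := by
      have := norm_sub_norm_le z (c : ℂ)
      rw [hcnorm] at this; linarith
    have h2 : ‖z + c‖ ≤ (1 + 2*c) * ‖z - c‖ := by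
      have : z + c = (z - c) + (2*c : ℝ) := by push_cast; ring
      rw [this]
      have h3 := norm_add_le (z - (c:ℂ)) ((2*c : ℝ) : ℂ)
      have h4 : ‖((2*c : ℝ) : ℂ)‖ = 2*c := by
        rw [Complex.norm_real, Real.norm_of_nonneg (by linarith)]
      nlinarith
    rw [carlsonStep_norm g c hg0 z hne]
    have h5 : ‖z + c‖ * ‖z - c‖⁻¹ ≤ 1 + 2*c := by
      rw [← div_eq_mul_inv, div_le_iff₀ (by linarith)]
      linarith
    exact mul_le_mul h5 (hbd z hz) (norm_nonneg _) (by linarith)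
  intro z hz
  refine PhragmenLindelof.right_half_plane_of_bounded_on_real
    ⟨hdG, by rwa [Complex.closure_setOf_lt_re]⟩ ?_ ?_ ?_ hz
  · refine ⟨1, one_lt_two, 0, ?_⟩
    rw [Asymptotics.isBigO_iff]
    refine ⟨(1 + 2*c) * M, ?_⟩
    have h2 : ∀ᶠ w : ℂ in Bornology.cobounded ℂ ⊓ Filter.principal {z : ℂ | 0 < z.re},
        0 < w.re := eventually_inf_principal.mpr (Eventually.of_forall fun w h => h)
    filter_upwards [(eventually_cobounded_le_norm (c+1)).filter_mono inf_le_left, h2]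
      with w hw1 hw2
    simpa using hbig w hw2.le hw1
  · refine isBoundedUnder_of_eventually_le (a := (1 + 2*c) * M) ?_
    filter_upwards [eventually_ge_atTop (c+1)] with x hx
    refine hbig x (by simp; linarith) ?_
    rw [Complex.norm_real, Real.norm_of_nonneg (by linarith)]
    exact hx
  · intro x
    have hzre : ((x : ℂ) * I).re = 0 := by simp
    have hne : (x : ℂ) * I ≠ (c : ℂ) := by
      intro h
      have := congrArg Complex.re h
      rw [hzre] at this; simp at this; linarith
    rw [carlsonStep_norm g c hg0 _ hne, carlson_norm_imaxis _ hzre c,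
      mul_inv_cancel₀ (norm_ne_zero_iff.mpr (sub_ne_zero.mpr hne)), one_mul]
    exact hbd _ (le_of_eq hzre.symm)

lemma carlson_coord (w : ℂ) : ‖w‖^2 = w.re^2 + w.im^2 := by
  rw [Complex.sq_norm, Complex.normSq_apply]; ring

lemma carlson_prod_tendsto (z : ℂ) (hz : 0 < z.re) :
    Tendsto (fun n : ℕ => ∏ k ∈ Finset.Icc 1 n, (‖z - (k:ℂ)‖ / ‖z + (k:ℂ)‖)) atTop (𝓝 0) := by
  set x := z.re with hx
  set t : ℕ → ℝ := fun k => 4 * x * k / ((x + k)^2 + z.im^2) with ht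
  have hD : ∀ k : ℕ, 0 < (x + k)^2 + z.im^2 := by
    intro k
    have h1 : 0 < x + k := by positivity
    nlinarith [sq_nonneg z.im]
  have hA : ∀ k : ℕ, ‖z - (k:ℂ)‖^2 = (x - k)^2 + z.im^2 := by
    intro k; rw [carlson_coord]; simp [hx]
  have hB : ∀ k : ℕ, ‖z + (k:ℂ)‖^2 = (x + k)^2 + z.im^2 := by
    intro k; rw [carlson_coord]; simp [hx]
  have ht0 : ∀ k : ℕ, 0 ≤ t k := by
    intro k
    have := hD k
    have : (0:ℝ) ≤ 4 * x * k := by positivity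
    positivity
  have hr : ∀ k : ℕ, ‖z - (k:ℂ)‖ / ‖z + (k:ℂ)‖ ≤ Real.exp (-(t k)/2) := by
    intro k
    have hBpos : 0 < ‖z + (k:ℂ)‖^2 := by rw [hB]; exact hD k
    have key : (‖z - (k:ℂ)‖ / ‖z + (k:ℂ)‖)^2 = 1 - t k := by
      rw [div_pow, hA, hB, ht]
      field_simp
      ring
    have h1 : 1 - t k ≤ Real.exp (-(t k)) := by
      have := Real.add_one_le_exp (-(t k)); linarith
    have h2 : Real.exp (-(t k)/2)^2 = Real.exp (-(t k)) := by
      rw [sq, ← Real.exp_add]; ring_nf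
    have h3 : (‖z - (k:ℂ)‖ / ‖z + (k:ℂ)‖)^2 ≤ Real.exp (-(t k)/2)^2 := by
      rw [key, h2]; exact h1
    have h4 : (0:ℝ) ≤ ‖z - (k:ℂ)‖ / ‖z + (k:ℂ)‖ := by positivity
    nlinarith [Real.exp_pos (-(t k)/2)]
  have hprod : ∀ n : ℕ, ∏ k ∈ Finset.Icc 1 n, (‖z - (k:ℂ)‖ / ‖z + (k:ℂ)‖) ≤
      Real.exp (∑ k ∈ Finset.Icc 1 n, (-(t k)/2)) := by
    intro n
    rw [Real.exp_sum]
    exact Finset.prod_le_prod (fun k _ => by positivity) (fun k _ => hr k)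
  -- divergence of the sum
  set K : ℕ := max 1 ⌈‖z‖⌉₊ with hK
  have hK1 : 1 ≤ K := le_max_left _ _
  set u : ℕ → ℝ := fun k => if K ≤ k then x/2 * (1/(k:ℝ)) else 0 with hu
  have hu0 : ∀ k, 0 ≤ u k := by
    intro k; rw [hu]; dsimp only; split
    · positivity
    · exact le_rfl
  have hnot : ¬ Summable u := by
    intro hs
    have h2 : Summable (fun n : ℕ => u (n + K)) := (summable_nat_add_iff K).mpr hs
    have h3 : Summable (fun n : ℕ => x/2 * (1/((n + K : ℕ):ℝ))) := by
      refine h2.congr fun n => ?_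
      rw [hu]; dsimp only; rw [if_pos (Nat.le_add_left K n)]
    have h4 : Summable (fun n : ℕ => (1/((n + K : ℕ):ℝ))) := by
      have h5 := h3.mul_left (2/x)
      refine h5.congr fun n => ?_
      field_simp
    have h6 : Summable (fun n : ℕ => 1/(n:ℝ)) := (summable_nat_add_iff K).mp h4
    exact Real.not_summable_one_div_natCast h6
  have hS : Tendsto (fun n : ℕ => ∑ k ∈ Finset.range n, u k) atTop atTop :=
    (not_summable_iff_tendsto_nat_atTop_of_nonneg hu0).mp hnot
  have hsum_eq : ∀ n : ℕ, ∑ k ∈ Finset.range (n+1), u k = ∑ k ∈ Finset.Icc 1 n, u k := by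
    intro n
    refine (Finset.sum_subset ?_ ?_).symm
    · intro k hk
      simp only [Finset.mem_Icc] at hk
      simp only [Finset.mem_range]; omega
    · intro k hk hk2
      simp only [Finset.mem_range] at hk
      simp only [Finset.mem_Icc] at hk2
      have : k = 0 := by omega
      subst this
      rw [hu]; dsimp only; rw [if_neg (by omega)]
  have hle : ∀ n : ℕ, ∑ k ∈ Finset.range (n+1), u k ≤ ∑ k ∈ Finset.Icc 1 n, t k / 2 := by
    intro n
    rw [hsum_eq n]
    refine Finset.sum_le_sum fun k hk => ?_
    rw [hu]; dsimp only
    split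
    · rename_i hKk
      have hk1 : 1 ≤ k := le_trans hK1 hKk
      have hkpos : (0:ℝ) < k := by exact_mod_cast hk1
      have hzk : ‖z‖ ≤ k := by
        calc ‖z‖ ≤ (⌈‖z‖⌉₊ : ℝ) := Nat.le_ceil _
        _ ≤ (K : ℝ) := by exact_mod_cast le_max_right 1 ⌈‖z‖⌉₊
        _ ≤ (k : ℝ) := by exact_mod_cast hKk
      have hx_le : x / k ≤ t k := by
        rw [ht]; dsimp only
        rw [div_le_div_iff₀ hkpos (hD k)]
        have hBk : (x + (k:ℝ))^2 + z.im^2 ≤ 4 * (k:ℝ)^2 := by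
          rw [← hB k]
          have h5 : ‖z + (k:ℂ)‖ ≤ ‖z‖ + ‖((k:ℕ):ℂ)‖ := norm_add_le z _
          rw [Complex.norm_natCast] at h5
          nlinarith [norm_nonneg (z + (k:ℂ))]
        nlinarith
      calc x/2 * (1/(k:ℝ)) = (x / k) / 2 := by ring
      _ ≤ t k / 2 := by linarith
    · have := ht0 k; linarith
  have hT : Tendsto (fun n : ℕ => ∑ k ∈ Finset.Icc 1 n, t k / 2) atTop atTop :=
    tendsto_atTop_mono hle (hS.comp (tendsto_add_atTop_nat 1))
  have hTb : Tendsto (fun n : ℕ => ∑ k ∈ Finset.Icc 1 n, (-(t k)/2)) atTop atBot := by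
    have : (fun n : ℕ => ∑ k ∈ Finset.Icc 1 n, (-(t k)/2)) =
        (fun y : ℝ => -y) ∘ (fun n : ℕ => ∑ k ∈ Finset.Icc 1 n, t k / 2) := by
      funext n
      simp [Function.comp, neg_div, Finset.sum_neg_distrib]
    rw [this]
    exact tendsto_neg_atTop_atBot.comp hT
  have hexp0 : Tendsto (fun n : ℕ => Real.exp (∑ k ∈ Finset.Icc 1 n, (-(t k)/2)))
      atTop (𝓝 0) := Real.tendsto_exp_atBot.comp hTb
  refine squeeze_zero (fun n => ?_) hprod hexp0
  exact Finset.prod_nonneg fun k _ => by positivity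

noncomputable def carlsonSeq (g : ℂ → ℂ) : ℕ → ℂ → ℂ
  | 0 => g
  | n+1 => carlsonStep (carlsonSeq g n) (((n+1 : ℝ) : ℂ))

lemma carlson_invariant (g : ℂ → ℂ) (M : ℝ)
    (hd : DifferentiableOn ℂ g {z : ℂ | 0 < z.re})
    (hcont : ContinuousOn g {z : ℂ | 0 ≤ z.re})
    (hbd : ∀ z : ℂ, 0 ≤ z.re → ‖g z‖ ≤ M)
    (hv : ∀ m : ℕ, 0 < m → g m = 0) :
    ∀ n : ℕ,
      DifferentiableOn ℂ (carlsonSeq g n) {z : ℂ | 0 < z.re} ∧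
      ContinuousOn (carlsonSeq g n) {z : ℂ | 0 ≤ z.re} ∧
      (∀ z : ℂ, 0 ≤ z.re → ‖carlsonSeq g n z‖ ≤ M) ∧
      (∀ m : ℕ, n < m → carlsonSeq g n m = 0) ∧
      (∀ z : ℂ, 0 < z.re → (∀ k : ℕ, 0 < k → z ≠ k) →
        g z = carlsonSeq g n z * ∏ k ∈ Finset.Icc 1 n, ((z - k) / (z + k))) := by
  intro n
  induction n with
  | zero =>
    refine ⟨hd, hcont, hbd, fun m hm => hv m hm, fun z hz hk => by simp [carlsonSeq]⟩
  | succ n ih =>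
    obtain ⟨ih1, ih2, ih3, ih4, ih5⟩ := ih
    have hcast : ((n+1 : ℝ) : ℂ) = ((n+1 : ℕ) : ℂ) := by push_cast; ring
    have hg0 : carlsonSeq g n (((n+1 : ℝ) : ℂ)) = 0 := by
      rw [hcast]; exact ih4 (n+1) (Nat.lt_succ_self n)
    have hc1 : (1 : ℝ) ≤ (n+1 : ℝ) := by push_cast; linarith [Nat.cast_nonneg (α := ℝ) n]
    obtain ⟨h1, h2, h3⟩ := carlson_step (carlsonSeq g n) M (n+1 : ℝ) hc1 ih1 ih2 ih3 hg0
    have hseq : carlsonSeq g (n+1) = carlsonStep (carlsonSeq g n) (((n+1 : ℝ) : ℂ)) := rfl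
    refine ⟨by rw [hseq]; exact h1, by rw [hseq]; exact h2, by rw [hseq]; exact h3, ?_, ?_⟩
    · intro m hm
      have hne : (m : ℂ) ≠ ((n+1 : ℝ) : ℂ) := by
        rw [hcast]
        exact_mod_cast Nat.ne_of_gt hm
      rw [hseq, carlsonStep_eq _ _ hg0 _ hne, ih4 m (by omega)]
      ring
    · intro z hz hk
      have hne : z ≠ ((n+1 : ℝ) : ℂ) := by
        rw [hcast]; exact hk (n+1) (Nat.succ_pos n)
      have hne0 : z + ((n+1 : ℕ) : ℂ) ≠ 0 := by
        intro h
        have := congrArg Complex.re h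
        simp at this
        linarith [this]
      have hne0' : z - ((n+1 : ℕ) : ℂ) ≠ 0 := by
        rw [sub_ne_zero, ← hcast]; exact hne
      rw [hseq, carlsonStep_eq _ _ hg0 _ hne,
        Finset.prod_Icc_succ_top (Nat.le_add_left 1 n), ← mul_assoc,
        ih5 z hz hk, hcast]
      set P := ∏ k ∈ Finset.Icc 1 n, ((z - k) / (z + k))
      set S := carlsonSeq g n z
      set c : ℂ := ((n+1 : ℕ) : ℂ)
      have : (z + c) * ((z - c)⁻¹ * S) * P * ((z - c) / (z + c)) =
          S * P * ((z - c)⁻¹ * (z - c)) * ((z + c) * (z + c)⁻¹) := by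
        rw [div_eq_mul_inv]; ring
      rw [this, inv_mul_cancel₀ hne0', mul_inv_cancel₀ hne0, mul_one, mul_one]


/-- Carlson's theorem (polynomial growth case): a function holomorphic on the open
right half-plane, continuous on its closure, of polynomial growth there, and
vanishing at every positive integer, vanishes identically on the right half-plane. -/
theorem carlson_polynomial_growth (f : ℂ → ℂ)
    (hd : DifferentiableOn ℂ f {z : ℂ | 0 < z.re})
    (hc : ContinuousOn f {z : ℂ | 0 ≤ z.re})
    (C : ℝ) (hC : 0 < C) (N : ℕ)
    (hbd : ∀ z : ℂ, 0 ≤ z.re → ‖f z‖ ≤ C * (1 + ‖z‖) ^ N)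
    (hzero : ∀ k : ℕ, 0 < k → f k = 0) :
    ∀ z : ℂ, 0 < z.re → f z = 0 := by
  set g : ℂ → ℂ := fun z => ((z+1)^N)⁻¹ * f z with hg
  have hne1 : ∀ z : ℂ, 0 ≤ z.re → z + 1 ≠ 0 := by
    intro z hz h
    have := congrArg Complex.re h
    simp at this; linarith
  have hdg : DifferentiableOn ℂ g {z : ℂ | 0 < z.re} := by
    refine DifferentiableOn.mul (DifferentiableOn.inv ?_ ?_) hd
    · exact (differentiableOn_id.add_const 1).pow N
    · intro z hz; exact pow_ne_zero N (hne1 z (le_of_lt hz))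
  have hcg : ContinuousOn g {z : ℂ | 0 ≤ z.re} := by
    refine ContinuousOn.mul (ContinuousOn.inv₀ ?_ ?_) hc
    · exact ((continuous_id.add continuous_const).pow N).continuousOn
    · intro z hz; exact pow_ne_zero N (hne1 z hz)
  have hMg : ∀ z : ℂ, 0 ≤ z.re → ‖g z‖ ≤ C * 2^N := by
    intro z hz
    have e1 : ‖z+1‖^2 = (z.re+1)^2 + z.im^2 := by rw [carlson_coord]; simp
    have e2 : ‖z‖^2 = z.re^2 + z.im^2 := carlson_coord z
    have h1 : 1 ≤ ‖z+1‖ := by nlinarith [norm_nonneg (z+1), sq_nonneg z.im]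
    have h2 : ‖z‖ ≤ ‖z+1‖ := by nlinarith [norm_nonneg (z+1), norm_nonneg z]
    have h3 : ‖f z‖ ≤ C * 2^N * ‖z+1‖^N := by
      calc ‖f z‖ ≤ C * (1+‖z‖)^N := hbd z hz
      _ ≤ C * (2*‖z+1‖)^N := by
          refine mul_le_mul_of_nonneg_left (pow_le_pow_left₀ (by positivity) (by linarith) N) hC.le
      _ = C * 2^N * ‖z+1‖^N := by rw [mul_pow]; ring
    rw [hg]
    dsimp only
    rw [norm_mul, norm_inv, norm_pow]
    rw [inv_mul_le_iff₀ (by positivity)]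
    exact h3.trans_eq (mul_comm _ _)
  have hvg : ∀ m : ℕ, 0 < m → g (m : ℂ) = 0 := by
    intro m hm; rw [hg]; dsimp only; rw [hzero m hm, mul_zero]
  intro z hz
  by_cases hp : ∃ p : ℕ, z = (p : ℂ)
  · obtain ⟨p, rfl⟩ := hp
    have hp0 : (0:ℝ) < p := by simpa using hz
    exact hzero p (by exact_mod_cast hp0)
  · have hk : ∀ k : ℕ, 0 < k → z ≠ (k:ℂ) := fun k _ h => hp ⟨k, h⟩
    have hinv := carlson_invariant g (C*2^N) hdg hcg hMg hvg
    have hgz : ‖g z‖ ≤ 0 := by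
      have hlim := carlson_prod_tendsto z hz
      have hlim2 : Tendsto (fun n : ℕ =>
          (C*2^N) * ∏ k ∈ Finset.Icc 1 n, (‖z-(k:ℂ)‖/‖z+(k:ℂ)‖)) atTop (𝓝 0) := by
        simpa using hlim.const_mul (C*2^N)
      refine ge_of_tendsto hlim2 (Eventually.of_forall fun n => ?_)
      obtain ⟨_, _, h3, _, h5⟩ := hinv n
      rw [h5 z hz hk, norm_mul]
      have hnp : ‖∏ k ∈ Finset.Icc 1 n, ((z - k)/(z + k))‖ =
          ∏ k ∈ Finset.Icc 1 n, (‖z-(k:ℂ)‖/‖z+(k:ℂ)‖) := by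
        rw [norm_prod]
        exact Finset.prod_congr rfl fun k _ => norm_div _ _
      rw [hnp]
      exact mul_le_mul_of_nonneg_right (h3 z hz.le)
        (Finset.prod_nonneg fun k _ => by positivity)
    have hg0 : g z = 0 := norm_le_zero_iff.mp hgz
    have hfz : f z = (z+1)^N * g z := by
      rw [hg]; dsimp only
      rw [← mul_assoc, mul_inv_cancel₀ (pow_ne_zero N (hne1 z hz.le)), one_mul]
    rw [hfz, hg0, mul_zero]
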